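/- Let Y ∈ C̄_n be an indecomposable object corresponding to a double limit arc. Then the graded endomorphism ring End*_{C̄_n}(Y) is isomorphic, as a graded ring, to the Laurent polynomial ring k[x^{±1}] with x concentrated in degree −1. -/

import Mathlib

/-!
Combinatorial model of the completed ∞-gon with `n` accumulation points,
and an axiomatisation of the Paquette–Yıldırım category `C̄ₙ`.
-/

open CategoryTheory CategoryTheory.Limits CategoryTheory.Pretriangulated

namespace PY

/-- Marked points of the completed ∞-gon with `n` accumulation points:
`acc i` is the `i`-th accumulation point and `pt i m` is the `m`-th marked
point in the open segment between `acc i` and `acc (i+1)`. -/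
inductive Pt (n : ℕ) : Type
  | acc (i : Fin n) : Pt n
  | pt (i : Fin n) (m : ℤ) : Pt n
deriving DecidableEq

/-- A strictly increasing embedding `ℤ → (0,1) ∩ ℚ`, used to give each marked
point a coordinate on the circle. -/
def posm (m : ℤ) : ℚ := 1/2 + (m : ℚ) / (2 * ((|m| : ℤ) + 1 : ℤ))

/-- The coordinate of a point of the completed ∞-gon on the circle of
circumference `n` (the cyclic order is read off from these coordinates). -/
def coord {n : ℕ} : Pt n → ℚ
  | .acc i => i
  | .pt i m => i + posm m

/-- Whether a point is an accumulation point. -/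
def isAcc {n : ℕ} : Pt n → Prop
  | .acc _ => True
  | .pt _ _ => False

/-- The action of the `j`-th power of the suspension functor on points:
marked points are moved to their `j`-th predecessor, accumulation points stay fixed. -/
def shiftPt {n : ℕ} (j : ℤ) : Pt n → Pt n
  | .acc i => .acc i
  | .pt i m => .pt i (m - j)

/-- Two marked points are adjacent when one is the successor of the other. -/
def Adjacent {n : ℕ} (x y : Pt n) : Prop :=
  ∃ (i : Fin n) (m : ℤ), (x = .pt i m ∧ y = .pt i (m + 1)) ∨ (x = .pt i (m + 1) ∧ y = .pt i m)

/-- (Potential) arcs: unordered pairs of points. -/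
abbrev E (n : ℕ) := Sym2 (Pt n)

/-- An arc of the completed ∞-gon: an unordered pair of distinct,
non-adjacent points. -/
def IsArc {n : ℕ} (e : E n) : Prop :=
  ¬ e.IsDiag ∧ ∀ x y : Pt n, e = s(x, y) → ¬ Adjacent x y

/-- The smaller of the two coordinates of the endpoints. -/
def lo {n : ℕ} (e : E n) : ℚ :=
  Sym2.lift ⟨fun a b => min (coord a) (coord b), fun _ _ => min_comm _ _⟩ e

/-- The larger of the two coordinates of the endpoints. -/
def hi {n : ℕ} (e : E n) : ℚ :=
  Sym2.lift ⟨fun a b => max (coord a) (coord b), fun _ _ => max_comm _ _⟩ e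

/-- Two arcs cross when their endpoints strictly interleave on the circle. -/
def Cross {n : ℕ} (e f : E n) : Prop :=
  (lo e < lo f ∧ lo f < hi e ∧ hi e < hi f) ∨ (lo f < lo e ∧ lo e < hi f ∧ hi f < hi e)

/-- The `j`-th suspension of an arc. -/
def shiftE {n : ℕ} (j : ℤ) (e : E n) : E n := e.map (shiftPt j)

/-- A limit arc: exactly one endpoint is an accumulation point. -/
def IsLimitArc {n : ℕ} (e : E n) : Prop :=
  IsArc e ∧ ∀ x y : Pt n, e = s(x, y) →
    ((isAcc x ∧ ¬ isAcc y) ∨ (¬ isAcc x ∧ isAcc y))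

/-- A double limit arc: both endpoints are accumulation points. -/
def IsDoubleLimitArc {n : ℕ} (e : E n) : Prop :=
  IsArc e ∧ ∀ x ∈ e, isAcc x

/-- Strict cyclic betweenness of three distinct coordinates on the circle,
read anticlockwise. -/
def cyc (p q r : ℚ) : Prop :=
  (p < q ∧ q < r) ∨ (q < r ∧ r < p) ∨ (r < p ∧ p < q)

/-- `RotationAbout e f` holds when `e` and `f` share exactly one accumulation
point as an endpoint, and `f` is obtained from `e` by rotating about the common
endpoint following the (anticlockwise) orientation of the circle. -/
def RotationAbout {n : ℕ} (e f : E n) : Prop :=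
  ∃ a x y : Pt n, isAcc a ∧ e = s(a, x) ∧ f = s(a, y) ∧ x ≠ y ∧
    cyc (coord a) (coord x) (coord y)

/-- The combinatorial criterion for `C̄ₙ(X, Y[1]) ≅ k` for indecomposables
`X`, `Y` with arcs `e`, `f`. -/
def ExtOne {n : ℕ} (e f : E n) : Prop :=
  Cross e f ∨ RotationAbout e f ∨ (e = f ∧ IsDoubleLimitArc e)

/-- An axiomatisation of the Paquette–Yıldırım category `C̄ₙ`:
a `k`-linear, Hom-finite, Krull–Schmidt pretriangulated category whose
indecomposable objects correspond to the arcs of the completed ∞-gon with `n`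
accumulation points, with suspension acting on arcs by moving marked endpoints
to their predecessors, and with one-dimensional `Hom(X, Y[1])` exactly when
the arcs cross, share an accumulation point in the anticlockwise-rotation
configuration, or are equal double limit arcs. -/
structure Cat (k : Type) [Field k] (n : ℕ) where
  /-- The underlying type of objects. -/
  C : Type 1
  [instCategory : Category.{1} C]
  [instPreadditive : Preadditive C]
  [instLinear : Linear k C]
  [instHasShift : HasShift C ℤ]
  [instHasZeroObject : HasZeroObject C]
  [instHasFiniteBiproducts : HasFiniteBiproducts C]
  [instShiftAdditive : ∀ i : ℤ, (shiftFunctor C i).Additive]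
  [instPretriangulated : Pretriangulated C]
  /-- Hom-finiteness. -/
  homFinite : ∀ X Y : C, FiniteDimensional k (X ⟶ Y)
  /-- The indecomposable object attached to an arc. -/
  obj : E n → C
  obj_indec : ∀ e : E n, IsArc e → Indecomposable (obj e)
  /-- Suspension acts on arcs by moving marked endpoints to predecessors. -/
  obj_shift : ∀ e : E n, IsArc e → Nonempty ((obj e)⟦(1 : ℤ)⟧ ≅ obj (shiftE 1 e))
  /-- Every indecomposable object comes from an arc. -/
  obj_surj : ∀ X : C, Indecomposable X → ∃ e : E n, IsArc e ∧ Nonempty (X ≅ obj e)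
  /-- Distinct arcs give non-isomorphic indecomposables. -/
  obj_inj : ∀ e f : E n, IsArc e → IsArc f → Nonempty (obj e ≅ obj f) → e = f
  /-- Krull–Schmidt: every object decomposes into arc objects. -/
  decomp : ∀ X : C, ∃ (m : ℕ) (f : Fin m → E n),
    (∀ j, IsArc (f j)) ∧ Nonempty (X ≅ ⨁ fun j => obj (f j))
  /-- The Hom spaces `C̄ₙ(X, Y[1])` are one-dimensional exactly in the
  combinatorial situations of `ExtOne`, and vanish otherwise. -/
  hom_one : ∀ e f : E n, IsArc e → IsArc f →
    (ExtOne e f ↔ Nonempty ((obj e ⟶ (obj f)⟦(1 : ℤ)⟧) ≃ₗ[k] k))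
  hom_dim : ∀ e f : E n, IsArc e → IsArc f →
    Module.rank k (obj e ⟶ (obj f)⟦(1 : ℤ)⟧) ≤ 1

attribute [instance] Cat.instCategory Cat.instPreadditive Cat.instLinear
  Cat.instHasShift Cat.instHasZeroObject Cat.instHasFiniteBiproducts
  Cat.instShiftAdditive Cat.instPretriangulated

variable {k : Type} [Field k] {n : ℕ}

/-- The thick subcategory generated by an object `G`: the smallest class of
objects containing `G` and closed under isomorphism, suspension, finite direct
sums, direct summands and extensions (cones of distinguished triangles). -/
inductive Thick (P : Cat k n) (G : P.C) : P.C → Prop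
  | gen : Thick P G G
  | iso {X Y : P.C} : (X ≅ Y) → Thick P G X → Thick P G Y
  | shift {X : P.C} (i : ℤ) : Thick P G X → Thick P G (X⟦i⟧)
  | sum {X Y : P.C} : Thick P G X → Thick P G Y → Thick P G (X ⊞ Y)
  | smdLeft {X Y : P.C} : Thick P G (X ⊞ Y) → Thick P G X
  | ext (T : Triangle P.C) (hT : T ∈ distTriang P.C) :
      Thick P G T.obj₁ → Thick P G T.obj₂ → Thick P G T.obj₃

/-- `G` is a classical generator when the thick subcategory it generates is
the whole category. -/
def IsClassicalGenerator (P : Cat k n) (G : P.C) : Prop :=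
  ∀ X : P.C, Thick P G X

/-- A minimal classical generator: no proper direct summand is a classical
generator. -/
def IsMinimalGenerator (P : Cat k n) (G : P.C) : Prop :=
  IsClassicalGenerator P G ∧
    ∀ H H' : P.C, Nonempty (G ≅ H ⊞ H') → ¬ IsZero H' → ¬ IsClassicalGenerator P H

/-- A limit generator: a minimal classical generator all of whose
indecomposable direct summands are limit or double limit arcs, no two of which
cross after any suspension. -/
def IsLimitGenerator (P : Cat k n) (G : P.C) : Prop :=
  IsMinimalGenerator P G ∧
    ∃ (m : ℕ) (f : Fin m → E n),
      (∀ j, IsArc (f j)) ∧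
      Nonempty (G ≅ ⨁ fun j => P.obj (f j)) ∧
      (∀ j, IsLimitArc (f j) ∨ IsDoubleLimitArc (f j)) ∧
      (∀ j l (i : ℤ), ¬ Cross (f j) (shiftE i (f l)))

/-- Membership in `add (G[i] : i ∈ ℤ)`: direct summands of finite direct sums
of suspensions of `G`. -/
def AddMem (P : Cat k n) (G : P.C) (X : P.C) : Prop :=
  ∃ (m : ℕ) (g : Fin m → ℤ) (Y : P.C), Nonempty ((⨁ fun j => G⟦g j⟧) ≅ X ⊞ Y)

/-- Two objects are equivalent when the additive categories
`add (G[i] : i ∈ ℤ)` and `add (G'[i] : i ∈ ℤ)` are equivalent. -/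
def GenEquiv (P : Cat k n) (G G' : P.C) : Prop :=
  ∃ e : ObjectProperty.FullSubcategory (AddMem P G) ≌ ObjectProperty.FullSubcategory (AddMem P G'),
    e.functor.Additive

end PY

namespace PYDisc

/-- The `2n` marked points on the boundary of the disc `(D², Mₙ, ∅)`:
`o i` are the `∘`-points and `b i` the `•`-points, alternating. -/
inductive DPt (n : ℕ) : Type
  | o (i : Fin n) : DPt n
  | b (i : Fin n) : DPt n
deriving DecidableEq

/-- Position of a marked point of the disc on the boundary circle. -/
def dcoord {n : ℕ} : DPt n → ℚ
  | .o i => 2 * i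
  | .b i => 2 * i + 1

/-- Whether a marked point is a `∘`-point. -/
def isO {n : ℕ} : DPt n → Prop
  | .o _ => True
  | .b _ => False

/-- Whether a marked point is a `•`-point. -/
def isB {n : ℕ} : DPt n → Prop
  | .o _ => False
  | .b _ => True

/-- Potential arcs of the disc: unordered pairs of marked points (an arc in the
unpunctured disc is determined up to isotopy by its endpoints). -/
abbrev DE (n : ℕ) := Sym2 (DPt n)

def dlo {n : ℕ} (e : DE n) : ℚ :=
  Sym2.lift ⟨fun a b => min (dcoord a) (dcoord b), fun _ _ => min_comm _ _⟩ e

def dhi {n : ℕ} (e : DE n) : ℚ :=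
  Sym2.lift ⟨fun a b => max (dcoord a) (dcoord b), fun _ _ => max_comm _ _⟩ e

/-- Two arcs of the disc intersect (in the interior) when their endpoints
strictly interleave on the boundary circle. -/
def DCross {n : ℕ} (e f : DE n) : Prop :=
  (dlo e < dlo f ∧ dlo f < dhi e ∧ dhi e < dhi f) ∨
    (dlo f < dlo e ∧ dlo e < dhi f ∧ dhi f < dhi e)

/-- A `∘`-arc: an unordered pair of distinct `∘`-points.  (In the unpunctured
disc no such arc is contractible to a marked point.) -/
def IsOArc {n : ℕ} (e : DE n) : Prop :=
  ¬ e.IsDiag ∧ ∀ x ∈ e, isO x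

/-- A binding arc: an arc joining a `∘`-point to a `•`-point. -/
def IsBindingArc {n : ℕ} (e : DE n) : Prop :=
  ∃ x y : DPt n, e = s(x, y) ∧ isO x ∧ isB y

/-- An admissible collection of `∘`-arcs of the unpunctured disc: the arcs are
pairwise non-intersecting and do not enclose a subsurface with no boundary
segment on its boundary (since there are no punctures, the latter is
equivalent to the arcs not containing a cycle, i.e. forming a forest). -/
def IsAdmissibleColl {n : ℕ} (Γ : Finset (DE n)) : Prop :=
  (∀ e ∈ Γ, IsOArc e) ∧
  (∀ e ∈ Γ, ∀ f ∈ Γ, ¬ DCross e f) ∧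
  (SimpleGraph.fromEdgeSet (↑Γ : Set (Sym2 (DPt n)))).IsAcyclic

/-- An admissible `∘`-dissection: a maximal admissible collection of `∘`-arcs. -/
def IsODissection {n : ℕ} (Γ : Finset (DE n)) : Prop :=
  IsAdmissibleColl Γ ∧ ∀ Γ' : Finset (DE n), IsAdmissibleColl Γ' → Γ ⊆ Γ' → Γ' = Γ

/-- An extended admissible `∘`-dissection of `(D², Mₙ, ∅)`: an admissible
`∘`-dissection together with `n = |M•|` binding arcs, no two of which share a
`•`-endpoint, all arcs being pairwise distinct and non-intersecting. -/
def IsExtDissection {n : ℕ} (Δ : Finset (DE n)) : Prop :=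
  ∃ Γ B : Finset (DE n),
    Δ = Γ ∪ B ∧ Disjoint Γ B ∧
    IsODissection Γ ∧
    (∀ e ∈ B, IsBindingArc e) ∧
    B.card = n ∧
    (∀ e ∈ B, ∀ f ∈ B, e ≠ f → ∀ p : DPt n, isB p → ¬ (p ∈ e ∧ p ∈ f)) ∧
    (∀ e ∈ Δ, ∀ f ∈ Δ, ¬ DCross e f)

/-- Rotation of the marked disc by `t` steps (the mapping-class-group shadow of
an orientation-preserving homeomorphism of the marked disc). -/
def rot {n : ℕ} (t : Fin n) : DPt n → DPt n
  | .o i => .o (i + t)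
  | .b i => .b (i + t)

/-- Two collections of arcs of the marked disc are homeomorphic when one is
obtained from the other by a rotation of the marked disc. -/
def DissHomeo {n : ℕ} (Δ Δ' : Finset (DE n)) : Prop :=
  ∃ t : Fin n, Δ' = Δ.image (Sym2.map (rot t))

end PYDisc

namespace PYProof

open CategoryTheory

variable {C : Type*} [Category.{1} C] [HasShift C ℤ] {X : C}

/-- The unit of the graded endomorphism monoid. -/
noncomputable def unit (X : C) : ShiftedHom X X (0 : ℤ) :=
  ShiftedHom.mk₀ (0 : ℤ) rfl (𝟙 X)

/-- Powers of a degree-one element. -/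
noncomputable def pa (a : ShiftedHom X X (1 : ℤ)) : (m : ℕ) → ShiftedHom X X ((m : ℕ) : ℤ)
  | 0 => ShiftedHom.mk₀ (((0 : ℕ) : ℤ)) (by simp) (𝟙 X)
  | (m + 1) => (pa a m).comp a (by push_cast; ring)

/-- Powers of a degree-minus-one element. -/
noncomputable def pb (b : ShiftedHom X X (-1 : ℤ)) : (m : ℕ) → ShiftedHom X X (-((m : ℕ) : ℤ))
  | 0 => ShiftedHom.mk₀ ((-((0 : ℕ) : ℤ))) (by simp) (𝟙 X)
  | (m + 1) => (pb b m).comp b (by push_cast; ring)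

/-- The family of all integer powers. -/
noncomputable def g (a : ShiftedHom X X (1 : ℤ)) (b : ShiftedHom X X (-1 : ℤ)) :
    ∀ i : ℤ, ShiftedHom X X i
  | Int.ofNat m => pa a m
  | Int.negSucc m => pb b (m + 1)

lemma cancel_ba {a : ShiftedHom X X (1 : ℤ)} {b : ShiftedHom X X (-1 : ℤ)}
    (r2 : b.comp a (by ring) = unit X) {d d' : ℤ} (f : ShiftedHom X X d)
    (h1 : -1 + d = d') (h2 : 1 + d' = d) :
    (f.comp b h1).comp a h2 = f := by
  subst h1
  rw [ShiftedHom.comp_assoc f b a rfl (show (1 : ℤ) + -1 = 0 by ring)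
    (show (1 : ℤ) + -1 + d = d by ring), r2]
  exact ShiftedHom.comp_mk₀_id f 0 rfl

lemma cancel_ab {a : ShiftedHom X X (1 : ℤ)} {b : ShiftedHom X X (-1 : ℤ)}
    (r1 : a.comp b (by ring) = unit X) {d d' : ℤ} (f : ShiftedHom X X d)
    (h1 : 1 + d = d') (h2 : -1 + d' = d) :
    (f.comp a h1).comp b h2 = f := by
  subst h1
  rw [ShiftedHom.comp_assoc f a b rfl (show (-1 : ℤ) + 1 = 0 by ring)
    (show (-1 : ℤ) + 1 + d = d by ring), r1]
  exact ShiftedHom.comp_mk₀_id f 0 rfl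

lemma g_step_a {a : ShiftedHom X X (1 : ℤ)} {b : ShiftedHom X X (-1 : ℤ)}
    (r2 : b.comp a (by ring) = unit X) :
    ∀ (i c : ℤ) (h : 1 + i = c), (g a b i).comp a h = g a b c := by
  intro i
  match i with
  | Int.ofNat m =>
    intro c h
    obtain rfl : c = Int.ofNat (m + 1) := by
      simp only [Int.ofNat_eq_coe] at h ⊢; omega
    rfl
  | Int.negSucc 0 =>
    intro c h
    obtain rfl : c = Int.ofNat 0 := by
      simp only [Int.ofNat_eq_coe, Int.negSucc_eq] at h ⊢; omega
    have hb1 : pb b 1 = b := ShiftedHom.mk₀_id_comp _ (by simp) b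
    show (pb b 1).comp a h = _
    rw [hb1]
    exact r2
  | Int.negSucc (m + 1) =>
    intro c h
    obtain rfl : c = Int.negSucc m := by
      simp only [Int.negSucc_eq] at h ⊢; omega
    exact cancel_ba r2 (pb b (m + 1))
      (by simp only [Int.negSucc_eq]; push_cast; ring) h

lemma g_step_b {a : ShiftedHom X X (1 : ℤ)} {b : ShiftedHom X X (-1 : ℤ)}
    (r1 : a.comp b (by ring) = unit X) (r2 : b.comp a (by ring) = unit X) :
    ∀ (i c : ℤ) (h : -1 + i = c), (g a b i).comp b h = g a b c := by
  intro i c h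
  have h' : 1 + c = i := by omega
  rw [← g_step_a r2 c i h']
  exact cancel_ab r1 (g a b c) h' h

lemma g_zero (a : ShiftedHom X X (1 : ℤ)) (b : ShiftedHom X X (-1 : ℤ)) :
    g a b 0 = ShiftedHom.mk₀ (0 : ℤ) rfl (𝟙 X) := rfl

lemma g_mul {a : ShiftedHom X X (1 : ℤ)} {b : ShiftedHom X X (-1 : ℤ)}
    (r1 : a.comp b (by ring) = unit X) (r2 : b.comp a (by ring) = unit X)
    (i j : ℤ) : ∀ (c : ℤ) (h : j + i = c), (g a b i).comp (g a b j) h = g a b c := by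
  induction j using Int.induction_on with
  | zero =>
    intro c h
    obtain rfl : c = i := by omega
    rw [g_zero]
    exact ShiftedHom.comp_mk₀_id _ 0 rfl
  | succ j ih =>
    intro c h
    have e1 : g a b ((j : ℤ) + 1) = (g a b (j : ℤ)).comp a (by ring) :=
      (g_step_a r2 (j : ℤ) ((j : ℤ) + 1) (by ring)).symm
    rw [e1, ← ShiftedHom.comp_assoc (g a b i) (g a b (j : ℤ)) a rfl
      (show (1 : ℤ) + (j : ℤ) = (j : ℤ) + 1 by ring) (show (1 : ℤ) + (j : ℤ) + i = c by omega),
      ih ((j : ℤ) + i) rfl]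
    exact g_step_a r2 ((j : ℤ) + i) c (by omega)
  | pred j ih =>
    intro c h
    have e1 : g a b (-(j : ℤ) - 1) = (g a b (-(j : ℤ))).comp b (by ring) :=
      (g_step_b r1 r2 (-(j : ℤ)) (-(j : ℤ) - 1) (by ring)).symm
    rw [e1, ← ShiftedHom.comp_assoc (g a b i) (g a b (-(j : ℤ))) b rfl
      (show (-1 : ℤ) + (-(j : ℤ)) = -(j : ℤ) - 1 by ring)
      (show (-1 : ℤ) + (-(j : ℤ)) + i = c by omega),
      ih (-(j : ℤ) + i) rfl]
    exact g_step_b r1 r2 (-(j : ℤ) + i) c (by omega)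

lemma unit_isIso (X : C) : IsIso (unit X : X ⟶ X⟦(0 : ℤ)⟧) := by
  dsimp [unit, ShiftedHom.mk₀]
  infer_instance

lemma comp_isIso {Y Z : C} {p q r : ℤ} (f : ShiftedHom X Y p) (s : ShiftedHom Y Z q)
    (h : q + p = r) (hf : IsIso (f : X ⟶ Y⟦p⟧)) (hs : IsIso (s : Y ⟶ Z⟦q⟧)) :
    IsIso (f.comp s h : X ⟶ Z⟦r⟧) := by
  dsimp [ShiftedHom.comp]
  infer_instance

lemma pa_isIso {a : ShiftedHom X X (1 : ℤ)} (ha : IsIso (a : X ⟶ X⟦(1 : ℤ)⟧)) :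
    ∀ m : ℕ, IsIso (pa a m : X ⟶ X⟦((m : ℕ) : ℤ)⟧)
  | 0 => by dsimp [pa, ShiftedHom.mk₀]; infer_instance
  | (m + 1) => comp_isIso _ _ _ (pa_isIso ha m) ha

lemma pb_isIso {b : ShiftedHom X X (-1 : ℤ)} (hb : IsIso (b : X ⟶ X⟦(-1 : ℤ)⟧)) :
    ∀ m : ℕ, IsIso (pb b m : X ⟶ X⟦-((m : ℕ) : ℤ)⟧)
  | 0 => by dsimp [pb, ShiftedHom.mk₀]; infer_instance
  | (m + 1) => comp_isIso _ _ _ (pb_isIso hb m) hb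

lemma g_isIso {a : ShiftedHom X X (1 : ℤ)} {b : ShiftedHom X X (-1 : ℤ)}
    (ha : IsIso (a : X ⟶ X⟦(1 : ℤ)⟧)) (hb : IsIso (b : X ⟶ X⟦(-1 : ℤ)⟧)) :
    ∀ i : ℤ, IsIso (g a b i : X ⟶ X⟦i⟧)
  | Int.ofNat m => pa_isIso ha m
  | Int.negSucc m => pb_isIso hb (m + 1)

/-- Every degree-one isomorphism admits a two-sided inverse for the composition
of shifted homs. -/
lemma exists_inverse (a : ShiftedHom X X (1 : ℤ)) (ha : IsIso (a : X ⟶ X⟦(1 : ℤ)⟧)) :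
    ∃ b : ShiftedHom X X (-1 : ℤ), IsIso (b : X ⟶ X⟦(-1 : ℤ)⟧) ∧
      a.comp b (by ring) = unit X ∧ b.comp a (by ring) = unit X := by
  haveI := ha
  haveI := unit_isIso X
  set θ : ((X⟦(-1 : ℤ)⟧)⟦(1 : ℤ)⟧ : C) ⟶ X⟦(0 : ℤ)⟧ :=
    (shiftFunctorAdd' C (-1) 1 0 (by ring)).inv.app X with hθ
  set θ' : ((X⟦(1 : ℤ)⟧)⟦(-1 : ℤ)⟧ : C) ⟶ X⟦(0 : ℤ)⟧ :=
    (shiftFunctorAdd' C 1 (-1) 0 (by ring)).inv.app X with hθ'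
  haveI : IsIso θ := by rw [hθ]; infer_instance
  haveI : IsIso θ' := by rw [hθ']; infer_instance
  set br : ShiftedHom X X (-1 : ℤ) :=
    (shiftFunctor C (1 : ℤ)).preimage
      (inv (a : X ⟶ X⟦(1 : ℤ)⟧) ≫ (unit X : X ⟶ X⟦(0 : ℤ)⟧) ≫ inv θ) with hbr
  set bl : ShiftedHom X X (-1 : ℤ) :=
    (unit X : X ⟶ X⟦(0 : ℤ)⟧) ≫ inv θ' ≫ inv ((shiftFunctor C (-1 : ℤ)).map a) with hbl
  have r1 : a.comp br (show (-1 : ℤ) + 1 = 0 by ring) = unit X := by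
    show (a : X ⟶ X⟦(1 : ℤ)⟧) ≫ (shiftFunctor C (1 : ℤ)).map br ≫ θ = unit X
    rw [hbr, Functor.map_preimage]
    simp
  have r2' : bl.comp a (show (1 : ℤ) + -1 = 0 by ring) = unit X := by
    show (bl : X ⟶ X⟦(-1 : ℤ)⟧) ≫ (shiftFunctor C (-1 : ℤ)).map a ≫ θ' = unit X
    rw [hbl]
    simp
  have hble : bl = br := by
    have t1 : bl.comp (a.comp br (show (-1 : ℤ) + 1 = 0 by ring))
        (show (0 : ℤ) + -1 = -1 by ring) = bl := by
      rw [r1]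
      exact ShiftedHom.comp_mk₀_id bl 0 rfl
    have t2 : (bl.comp a (show (1 : ℤ) + -1 = 0 by ring)).comp br
        (show (-1 : ℤ) + 0 = -1 by ring) = br := by
      rw [r2']
      exact ShiftedHom.mk₀_id_comp 0 rfl br
    rw [ShiftedHom.comp_assoc bl a br (show (1 : ℤ) + -1 = 0 by ring)
      (show (-1 : ℤ) + 1 = 0 by ring) (show (-1 : ℤ) + 1 + -1 = -1 by ring)] at t2
    rw [← t1, t2]
  have hbiso : IsIso (br : X ⟶ X⟦(-1 : ℤ)⟧) := by
    have : IsIso ((shiftFunctor C (1 : ℤ)).map br) := by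
      rw [hbr, Functor.map_preimage]
      infer_instance
    exact isIso_of_reflects_iso br (shiftFunctor C (1 : ℤ))
  exact ⟨br, hbiso, r1, by rw [← hble]; exact r2'⟩

end PYProof

/-- A double limit arc is fixed by the suspension. -/
lemma PY.shiftE_double {n : ℕ} : ∀ e : PY.E n, (∀ x ∈ e, PY.isAcc x) → PY.shiftE 1 e = e := by
  intro e
  induction e using Sym2.ind with
  | _ x y =>
    intro h
    cases x with
    | pt i m => exact absurd (h _ (Sym2.mem_mk_left _ _)) (by simp [PY.isAcc])
    | acc i =>
      cases y with
      | pt i' m => exact absurd (h _ (Sym2.mem_mk_right _ _)) (by simp [PY.isAcc])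
      | acc i' => simp [PY.shiftE, PY.shiftPt]

/-- The graded endomorphism ring of the indecomposable object of `C̄ₙ`
corresponding to a double limit arc is isomorphic, as a graded ring, to the
Laurent polynomial ring `k[x^{±1}]` with `x` concentrated in degree `−1`:
there is a family of generators `g i` of the degree-`i` components for all
`i ∈ ℤ`, multiplying as powers of a single invertible degree-`−1` variable,
with `g 0` the identity, each nonzero and spanning its (one-dimensional)
component. -/
theorem gradedEnd_doubleLimitArc
    (k : Type) [Field k] (n : ℕ) (hn : 1 ≤ n) (P : PY.Cat k n)
    (e : PY.E n) (he : PY.IsDoubleLimitArc e) :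
    ∃ g : ∀ i : ℤ, (P.obj e ⟶ (P.obj e)⟦i⟧),
      (g 0 = ShiftedHom.mk₀ (0 : ℤ) rfl (𝟙 (P.obj e))) ∧
      (∀ i : ℤ, g i ≠ 0) ∧
      (∀ i : ℤ, ∀ f : P.obj e ⟶ (P.obj e)⟦i⟧, ∃ c : k, f = c • g i) ∧
      (∀ i j : ℤ,
        ShiftedHom.comp (g i) (g j) (show j + i = i + j by ring) = g (i + j)) := by
  classical
  obtain ⟨hArc, hAcc⟩ := he
  have hE : PY.shiftE 1 e = e := PY.shiftE_double e hAcc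
  set X : P.C := P.obj e with hX
  obtain ⟨ψ⟩ := P.obj_shift e hArc
  let Φ : X ≅ X⟦(1 : ℤ)⟧ := (ψ ≪≫ eqToIso (congrArg P.obj hE)).symm
  set a : ShiftedHom X X (1 : ℤ) := Φ.hom with haa
  have ha : IsIso (a : X ⟶ X⟦(1 : ℤ)⟧) := by rw [haa]; infer_instance
  obtain ⟨b, hb, r1, r2⟩ := PYProof.exists_inverse a ha
  have hnz : ¬ IsZero X := (P.obj_indec e hArc).1
  have hgnz : ∀ i : ℤ, (PYProof.g a b i : X ⟶ X⟦i⟧) ≠ 0 := by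
    intro i h0
    haveI := PYProof.g_isIso ha hb i
    refine hnz ((IsZero.iff_id_eq_zero X).mpr ?_)
    obtain ⟨v, hv, -⟩ := (PYProof.g_isIso ha hb i).out
    rw [h0, Limits.zero_comp] at hv
    exact hv.symm
  refine ⟨PYProof.g a b, PYProof.g_zero a b, hgnz, ?_, fun i j =>
    PYProof.g_mul r1 r2 i j (i + j) (by ring)⟩
  intro i f
  haveI := PYProof.g_isIso ha hb i
  let w : ((X⟦i⟧ : P.C) ≅ X⟦(1 : ℤ)⟧) :=
    (asIso (PYProof.g a b i : X ⟶ X⟦i⟧)).symm ≪≫ asIso (a : X ⟶ X⟦(1 : ℤ)⟧)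
  have hrank : Module.rank k (X ⟶ X⟦i⟧) ≤ 1 := by
    rw [(Linear.homCongr k (Iso.refl X) w).rank_eq]
    exact P.hom_dim e e hArc hArc
  obtain ⟨v₀, hv⟩ := rank_le_one_iff.mp hrank
  obtain ⟨r, hr⟩ := hv (PYProof.g a b i)
  obtain ⟨s, hs⟩ := hv f
  have hrne : r ≠ 0 := by
    rintro rfl
    rw [zero_smul] at hr
    exact hgnz i hr.symm
  refine ⟨s * r⁻¹, ?_⟩
  rw [← hr, smul_smul, mul_assoc, inv_mul_cancel₀ hrne, mul_one, hs]
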